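/- Let C be a subset of ℤ₂ⁿ and let σ be the sum of the elements of C. If σ ≠ 0, then for every vertex u the cubelike graph X(C) has perfect state transfer from u to u + σ at time π/2. If σ = 0, then X(C) is periodic at time π/2. -/

import Mathlib

open Matrix Complex

/-- Adjacency matrix of the cubelike graph `X(C)` over `ℤ₂ⁿ`:
`x, y` adjacent iff `x + y ∈ C`. -/
noncomputable def cubeAdj {n : ℕ} (C : Set (Fin n → ZMod 2)) :
    Matrix (Fin n → ZMod 2) (Fin n → ZMod 2) ℂ :=
  Matrix.of fun x y => C.indicator (fun _ => (1 : ℂ)) (x + y)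

/-- Transition matrix `H(t) = exp(i t A)` of a graph with adjacency matrix `A`. -/
noncomputable def transitionM {V : Type*} [Fintype V] [DecidableEq V]
    (A : Matrix V V ℂ) (t : ℝ) : Matrix V V ℂ :=
  NormedSpace.exp ((Complex.I * (t : ℂ)) • A)

lemma z2_add_self {n : ℕ} (x : Fin n → ZMod 2) : x + x = 0 := by
  funext i
  exact CharTwo.add_self_eq_zero _

lemma z2_cancel {n : ℕ} (a b : Fin n → ZMod 2) : a + (a + b) = b := by
  rw [← add_assoc, z2_add_self, zero_add]

/-- permutation matrix of translation by `c`. -/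
noncomputable def permM {n : ℕ} (c : Fin n → ZMod 2) :
    Matrix (Fin n → ZMod 2) (Fin n → ZMod 2) ℂ :=
  Matrix.of fun x y => if x + y = c then 1 else 0

lemma permM_zero {n : ℕ} : permM (0 : Fin n → ZMod 2) = 1 := by
  ext x y
  simp only [permM, Matrix.of_apply, Matrix.one_apply]
  congr 1
  simp only [eq_iff_iff]
  constructor
  · rintro h
    have := z2_cancel x y
    rw [h, add_zero] at this
    exact this
  · rintro rfl
    exact z2_add_self x

lemma permM_mul {n : ℕ} (c d : Fin n → ZMod 2) :
    permM c * permM d = permM (c + d) := by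
  ext x y
  simp only [permM, Matrix.mul_apply, Matrix.of_apply]
  rw [Finset.sum_eq_single (x + c)]
  · have h1 : x + (x + c) = c := z2_cancel x c
    simp only [h1, if_true]
    have : x + c + y = d ↔ x + y = c + d := by
      constructor
      · intro h
        rw [← h, add_comm x c, ← add_assoc, z2_cancel]
      · intro h
        rw [add_comm x c, add_assoc, h, z2_cancel]
    simp [this]
  · intro b _ hb
    have : x + b ≠ c := fun h => hb (by rw [← h, z2_cancel])
    simp [this]
  · simp

lemma permM_comm {n : ℕ} (c d : Fin n → ZMod 2) : Commute (permM c) (permM d) := by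
  unfold Commute SemiconjBy
  rw [permM_mul, permM_mul, add_comm]

lemma permM_sq {n : ℕ} (c : Fin n → ZMod 2) : permM c * permM c = 1 := by
  rw [permM_mul, z2_add_self, permM_zero]

lemma cubeAdj_eq_sum {n : ℕ} (C : Finset (Fin n → ZMod 2)) :
    cubeAdj (↑C : Set (Fin n → ZMod 2)) = ∑ c ∈ C, permM c := by
  ext x y
  simp only [cubeAdj, Matrix.of_apply, Matrix.sum_apply, permM, Set.indicator]
  by_cases h : x + y ∈ C
  · rw [Finset.sum_eq_single (x + y)]
    · simp [h]
    · intro b _ hb; simp [Ne.symm hb]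
    · intro hc; exact absurd h hc
  · rw [Finset.sum_eq_zero]
    · simp [h]
    · intro b hb
      have : x + y ≠ b := fun hxy => h (hxy ▸ hb)
      simp [this]

/-- exponential of a scalar multiple of an involution. -/
lemma exp_smul_involution {n : ℕ} (z : ℂ) (P : Matrix (Fin n → ZMod 2) (Fin n → ZMod 2) ℂ)
    (hP : P * P = 1) :
    NormedSpace.exp (z • P) = Complex.cosh z • 1 + Complex.sinh z • P := by
  rw [NormedSpace.exp_eq_tsum (𝕂 := ℂ)]
  refine HasSum.tsum_eq ?_
  have hPsq : P ^ 2 = 1 := by rw [sq, hP]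
  have hpow : ∀ m : ℕ, ((m.factorial : ℂ))⁻¹ • (z • P) ^ m
      = if Even m then (z ^ m / m.factorial) • (1 : Matrix (Fin n → ZMod 2) (Fin n → ZMod 2) ℂ)
        else (z ^ m / m.factorial) • P := by
    intro m
    rw [smul_pow, smul_smul]
    rcases Nat.even_or_odd m with he | ho
    · obtain ⟨k, rfl⟩ := he
      rw [if_pos ⟨k, rfl⟩, ← two_mul, pow_mul, pow_mul, hPsq, one_pow]
      congr 1
      rw [div_eq_mul_inv, mul_comm]
    · obtain ⟨k, rfl⟩ := ho
      rw [if_neg (by simp [Nat.even_add_one, Nat.even_iff, Nat.odd_iff.mp ⟨k, rfl⟩])]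
      rw [pow_succ, pow_succ, pow_mul, pow_mul, hPsq, one_pow, one_mul]
      congr 1
      rw [div_eq_mul_inv, mul_comm]
  refine HasSum.even_add_odd ?_ ?_
  · have := (Complex.hasSum_cosh z).smul_const
      (1 : Matrix (Fin n → ZMod 2) (Fin n → ZMod 2) ℂ)
    convert this using 2 with k
    · rfl
    rw [hpow (2 * k), if_pos ⟨k, (two_mul k)⟩]
  · have := (Complex.hasSum_sinh z).smul_const P
    convert this using 2 with k
    · rfl
    rw [hpow (2 * k + 1), if_neg (by simp [Nat.even_add_one, parity_simps])]

lemma exp_pi_half_permM {n : ℕ} (c : Fin n → ZMod 2) :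
    NormedSpace.exp ((Complex.I * ((Real.pi / 2 : ℝ) : ℂ)) • permM c)
      = Complex.I • permM c := by
  rw [exp_smul_involution _ _ (permM_sq c)]
  have h1 : Complex.cosh (Complex.I * ((Real.pi / 2 : ℝ) : ℂ)) = 0 := by
    rw [mul_comm, Complex.cosh_mul_I, ← Complex.ofReal_cos]
    simp [Real.cos_pi_div_two]
  have h2 : Complex.sinh (Complex.I * ((Real.pi / 2 : ℝ) : ℂ)) = Complex.I := by
    rw [mul_comm, Complex.sinh_mul_I, ← Complex.ofReal_sin]
    simp [Real.sin_pi_div_two]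
  rw [h1, h2]
  simp

lemma exp_sum_permM {n : ℕ} (C : Finset (Fin n → ZMod 2)) :
    NormedSpace.exp ((Complex.I * ((Real.pi / 2 : ℝ) : ℂ)) • ∑ c ∈ C, permM c)
      = (Complex.I ^ C.card) • permM (∑ c ∈ C, c) := by
  classical
  induction C using Finset.induction_on with
  | empty => simp [permM_zero, NormedSpace.exp_zero]
  | insert a s h ih =>
    rw [Finset.sum_insert h, smul_add]
    rw [Matrix.exp_add_of_commute _ _ (by
      apply Commute.smul_left
      apply Commute.smul_right
      apply Commute.sum_right
      intro d _
      exact permM_comm a d)]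
    rw [ih, exp_pi_half_permM, Finset.sum_insert h, Finset.card_insert_of_notMem h]
    rw [smul_mul_smul_comm, permM_mul, pow_succ]
    ring_nf

/-- Let `C ⊆ ℤ₂ⁿ` and let `σ` be the sum of the elements of `C`.
If `σ ≠ 0` then for every vertex `u` the cubelike graph `X(C)` has perfect state transfer from
`u` to `u + σ` at time `π/2` (the `(u, u+σ)` entry of `H(π/2)` has unit modulus).
If `σ = 0` then `X(C)` is periodic at `π/2` (`H(π/2) = γ • I` for some unimodular `γ ∈ ℂ`). -/
theorem cubelike_pst_or_periodic {n : ℕ} (C : Finset (Fin n → ZMod 2)) :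
    ((∑ u ∈ C, u) ≠ 0 →
      ∀ u : Fin n → ZMod 2,
        ‖
          (transitionM (cubeAdj (↑C : Set (Fin n → ZMod 2))) (Real.pi / 2) u
            (u + ∑ u ∈ C, u))‖ = 1) ∧
    ((∑ u ∈ C, u) = 0 →
      ∃ γ : ℂ, ‖γ‖ = 1 ∧
        transitionM (cubeAdj (↑C : Set (Fin n → ZMod 2))) (Real.pi / 2) = γ • 1) := by
  have key : transitionM (cubeAdj (↑C : Set (Fin n → ZMod 2))) (Real.pi / 2)
      = (Complex.I ^ C.card) • permM (∑ c ∈ C, c) := by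
    rw [transitionM, cubeAdj_eq_sum, exp_sum_permM]
  constructor
  · intro _ u
    rw [key]
    have hent : permM (∑ c ∈ C, c) u (u + ∑ c ∈ C, c) = 1 := by
      simp only [permM, Matrix.of_apply]
      rw [if_pos (z2_cancel u _)]
    simp only [Matrix.smul_apply, hent, smul_eq_mul, mul_one]
    simp [map_pow]
  · intro h
    refine ⟨Complex.I ^ C.card, by simp [map_pow], ?_⟩
    rw [key, h, permM_zero]
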